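/- Let F be a finite field, a primitive, n = |F|−1, d = 2α ≤ n−1, and gcd(|F|−1, α) = 1. Let Ḡ be the α×n matrix with (i,j) entry (a^{j})^{i} for 1 ≤ i ≤ α, 0 ≤ j ≤ n−1, and let Δ be the diagonal matrix diag(γ(a^0)^α, γ(a^1)^α, …, γ(a^{n−1})^α) for some nonzero γ ∈ F. Then the 2α×n matrix G = [Ḡ; ḠΔ] has rank 2α, i.e., its rows are linearly independent. -/

import Mathlib

theorem stmt12 {F : Type*} [Field F] [Fintype F] (a : F) (n α : ℕ)
    (hn : n = Fintype.card F - 1) (ha : IsPrimitiveRoot a n)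
    (hα : 2 * α + 1 ≤ n) (hgcd : Nat.gcd n α = 1) (γ : F) (hγ : γ ≠ 0) :
    let G : Matrix (Fin (2 * α)) (Fin n) F := fun i j =>
      if (i : ℕ) < α then (a ^ (j : ℕ)) ^ ((i : ℕ) + 1)
      else γ * (a ^ (j : ℕ)) ^ α * (a ^ (j : ℕ)) ^ ((i : ℕ) - α + 1)
    G.rank = 2 * α := by
  intro G
  have h2α : 2 * α ≤ n := by omega
  have hx : Function.Injective (fun i : Fin (2 * α) => a ^ ((i : ℕ) + 1)) := by
    intro i j h
    have hi := i.isLt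
    have hj := j.isLt
    have := ha.pow_inj (by omega : (i : ℕ) + 1 < n) (by omega : (j : ℕ) + 1 < n) h
    exact Fin.ext (by omega)
  set c : Fin (2 * α) → F := fun i => if (i : ℕ) < α then 1 else γ with hc
  have hcne : ∀ i, c i ≠ 0 := by
    intro i
    simp only [c]
    split_ifs
    · exact one_ne_zero
    · exact hγ
  have hG : ∀ i j, G i j = c i * (a ^ ((i : ℕ) + 1)) ^ (j : ℕ) := by
    intro i j
    simp only [G, c]
    split_ifs with h
    · rw [one_mul, ← pow_mul, ← pow_mul, Nat.mul_comm]
    · rw [mul_assoc, ← pow_add, ← pow_mul, ← pow_mul]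
      have : α + ((i : ℕ) - α + 1) = (i : ℕ) + 1 := by omega
      rw [this, Nat.mul_comm]
  have key : LinearIndependent F G := by
    rw [Fintype.linearIndependent_iff]
    intro g hg
    have hv : (fun i : Fin (2 * α) => g i * c i) = 0 := by
      apply Matrix.eq_zero_of_forall_pow_sum_mul_pow_eq_zero hx
      intro i
      have hcol := congrFun hg (Fin.castLE h2α i)
      simp only [Finset.sum_apply, Pi.smul_apply, smul_eq_mul, Pi.zero_apply] at hcol
      rw [← hcol]
      apply Finset.sum_congr rfl
      intro j _
      have hGji := hG j (Fin.castLE h2α i)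
      simp only [G] at hGji
      rw [hGji]
      ring_nf
      rfl
    intro i
    have := congrFun hv i
    simp only [Pi.zero_apply] at this
    exact (mul_eq_zero.mp this).resolve_right (hcne i)
  exact key.rank_matrix.trans (Fintype.card_fin _)
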